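/- Let m be a real number, P(x,y) = y, Q(x,y) = -m^2 + (m-1)y + x^2 + xy, and L(x,y) = x + y - m. Then at every point (x,y) with L(x,y) ≠ 0, the divergence identity ∂/∂x (P(x,y)/L(x,y)) + ∂/∂y (Q(x,y)/L(x,y)) = -1/L(x,y) holds. -/

import Mathlib

/-- For the Bogdanov–Takens system with `b = m - 1` and Dulac denominator
`L(x,y) = x + y - m`, at every point where `L ≠ 0` one has
`∂/∂x (P/L) + ∂/∂y (Q/L) = -1/L`. -/
theorem bt_dulac_divergence (m x y : ℝ) (h : x + y - m ≠ 0) :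
    deriv (fun x' : ℝ => y / (x' + y - m)) x +
      deriv (fun y' : ℝ =>
        (-m ^ 2 + (m - 1) * y' + x ^ 2 + x * y') / (x + y' - m)) y =
    -1 / (x + y - m) := by
  have hd1 : HasDerivAt (fun x' : ℝ => x' + y - m) 1 x := by
    simpa using ((hasDerivAt_id x).add_const y).sub_const m
  have hd2 : HasDerivAt (fun y' : ℝ => x + y' - m) 1 y := by
    simpa using ((hasDerivAt_id y).const_add x).sub_const m
  have hn2 : HasDerivAt (fun y' : ℝ => -m ^ 2 + (m - 1) * y' + x ^ 2 + x * y')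
      ((m - 1) + x) y := by
    have h1 : HasDerivAt (fun y' : ℝ => (m - 1) * y') (m - 1) y := by
      simpa using (hasDerivAt_id y).const_mul (m - 1)
    have h2 : HasDerivAt (fun y' : ℝ => x * y') x y := by
      simpa using (hasDerivAt_id y).const_mul x
    exact (((h1.const_add (-m ^ 2)).add_const (x ^ 2)).add h2)
  have hf1 : HasDerivAt (fun x' : ℝ => y / (x' + y - m))
      ((0 * (x + y - m) - y * 1) / (x + y - m) ^ 2) x :=
    (hasDerivAt_const x y).div hd1 h
  have hf2 : HasDerivAt (fun y' : ℝ =>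
      (-m ^ 2 + (m - 1) * y' + x ^ 2 + x * y') / (x + y' - m))
      ((((m - 1) + x) * (x + y - m) -
        (-m ^ 2 + (m - 1) * y + x ^ 2 + x * y) * 1) / (x + y - m) ^ 2) y :=
    hn2.div hd2 h
  rw [hf1.deriv, hf2.deriv]
  field_simp
  ring
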